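/- With ω_n and ζ_n defined by (ω₁,ζ₁) = (g, h⁻¹g⁻¹), (ω_{n+1},ζ_{n+1}) = (ω_n⁻¹ζ_n⁻¹, ω_nζ_n) in the free group F₂, the reduced word lengths for n ≥ 2 are: len(ω_n) = (13·2^{n-2}+2)/7 and len(ζ_n) = (13·2^{n-2}+2)/7 when n ≡ 0 mod 3; len(ω_n) = len(ζ_n) = (13·2^{n-2}+4)/7 when n ≡ 1 mod 3 (n ≥ 4); len(ω_n) = (13·2^{n-2}−6)/7 and len(ζ_n) = (13·2^{n-2}+8)/7 when n ≡ 2 mod 3. -/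

import Mathlib

namespace Elkasapy
open FreeGroup List

abbrev Lt := (Fin 2) × Bool

def R (a b : Lt) : Prop := ¬(a.1 = b.1 ∧ a.2 = !b.2)
instance : DecidableRel R := fun a b => inferInstanceAs (Decidable ¬_)
def IsRed (l : List Lt) : Prop := l.Chain' R
instance : DecidablePred IsRed := fun l => inferInstanceAs (Decidable (List.IsChain R l))

def redBool : List Lt → Bool
  | a :: b :: l => (!(a.1 == b.1 && a.2 == !b.2)) && redBool (b :: l)
  | _ => true

lemma isRed_of : ∀ l : List Lt, redBool l = true → IsRed l := by
  intro l
  induction l with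
  | nil => intro _; exact List.isChain_nil
  | cons a l ih =>
    cases l with
    | nil => intro _; exact List.isChain_singleton a
    | cons b m =>
      intro h
      unfold redBool at h
      rw [Bool.and_eq_true] at h
      refine List.isChain_cons_cons.mpr ⟨?_, ih h.2⟩
      have h1 := h.1
      simp only [Bool.not_eq_true', Bool.and_eq_false_iff, beq_eq_false_iff_ne, ne_eq,
        Bool.and_eq_true, beq_iff_eq] at h1 ⊢
      intro ⟨ha, hb⟩
      rcases h1 with h1 | h1
      · exact h1 ha
      · exact h1 hb

lemma reduce_eq_self {l : List Lt} (h : IsRed l) : FreeGroup.reduce l = l := by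
  induction l with
  | nil => rfl
  | cons x l ih =>
    rw [FreeGroup.reduce.cons, ih h.tail]
    cases l with
    | nil => rfl
    | cons y t =>
      have h1 : R x y := (List.isChain_cons_cons.mp h).1
      simp only [R] at h1
      simp [if_neg h1]

lemma norm_mk {l : List Lt} (h : IsRed l) : (FreeGroup.mk l).norm = l.length := by
  show (FreeGroup.mk l).toWord.length = l.length
  rw [FreeGroup.toWord_mk, reduce_eq_self h]

lemma invRev_append (l m : List Lt) : invRev (l ++ m) = invRev m ++ invRev l := by
  simp [invRev]

lemma isRed_invRev {l : List Lt} (h : IsRed l) : IsRed (invRev l) := by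
  unfold IsRed List.Chain' at *
  unfold invRev
  rw [List.isChain_reverse]
  rw [List.isChain_map]
  refine h.imp ?_
  intro a b hab
  simp only [flip, R, Bool.not_not] at *
  rintro ⟨h1, h2⟩
  exact hab ⟨h1.symm, h2.symm⟩

def StW (x : FreeGroup (Fin 2)) (A B : List Lt) (a : ℕ) : Prop :=
  ∃ t, x = .mk (A ++ t ++ B) ∧ IsRed (A ++ t ++ B) ∧ (A ++ t ++ B).length = a

lemma StW_inv {x : FreeGroup (Fin 2)} {A B : List Lt} {a : ℕ} (h : StW x A B a) :
    StW x⁻¹ (invRev B) (invRev A) a := by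
  obtain ⟨t, hx, hr, hl⟩ := h
  refine ⟨invRev t, ?_, ?_, ?_⟩
  · rw [hx, FreeGroup.inv_mk]
    rw [invRev_append, invRev_append]
    simp [List.append_assoc]
  · rw [← invRev_append, ← invRev_append]
    exact isRed_invRev (by simpa [List.append_assoc] using hr)
  · rw [← invRev_append, ← invRev_append, FreeGroup.invRev_length]
    simpa [List.append_assoc] using hl

lemma StW_mul {x y : FreeGroup (Fin 2)} {A D : List Lt} {b1 b2 b3 c1 c2 c3 : Lt} {a b : ℕ}
    (hx : StW x A [b1,b2,b3] a) (hy : StW y [c1,c2,c3] D b)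
    (hR : R b3 c1) : StW (x*y) A D (a+b) := by
  obtain ⟨t, hx, hrx, hlx⟩ := hx
  obtain ⟨s, hy, hry, hly⟩ := hy
  refine ⟨t ++ [b1,b2,b3] ++ [c1,c2,c3] ++ s, ?_, ?_, ?_⟩
  · rw [hx, hy, FreeGroup.mul_mk]
    congr 1
    simp [List.append_assoc]
  · have h : IsRed ((A ++ t ++ [b1,b2,b3]) ++ ([c1,c2,c3] ++ s ++ D)) := by
      apply List.IsChain.append hrx hry
      intro p hp q hq
      rw [List.getLast?_append_of_ne_nil _ (by simp)] at hp
      simp at hp hq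
      rw [← hp, ← hq]
      exact hR
    simpa [List.append_assoc] using h
  · simp only [List.length_append] at hlx hly ⊢
    simp at hlx hly ⊢
    omega

lemma StW_mul_cancel {x y : FreeGroup (Fin 2)} {A D : List Lt} {b1 b2 c2 c3 : Lt} {v : Fin 2}
    {b0 : Bool} {a b : ℕ}
    (hx : StW x A [b1,b2,(v,b0)] a) (hy : StW y [(v,!b0),c2,c3] D b)
    (hR : R b2 c2) : StW (x*y) A D (a+b-2) := by
  obtain ⟨t, hx, hrx, hlx⟩ := hx
  obtain ⟨s, hy, hry, hly⟩ := hy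
  refine ⟨t ++ [b1,b2] ++ [c2,c3] ++ s, ?_, ?_, ?_⟩
  · rw [hx, hy, FreeGroup.mul_mk]
    have hstep : FreeGroup.mk ((A ++ t ++ [b1,b2]) ++ (v,b0) :: (v,!b0) :: ([c2,c3] ++ s ++ D))
        = FreeGroup.mk ((A ++ t ++ [b1,b2]) ++ ([c2,c3] ++ s ++ D)) :=
      Quot.sound FreeGroup.Red.Step.not
    calc FreeGroup.mk (A ++ t ++ [b1, b2, (v, b0)] ++ ([(v, !b0), c2, c3] ++ s ++ D))
        = FreeGroup.mk ((A ++ t ++ [b1,b2]) ++ (v,b0) :: (v,!b0) :: ([c2,c3] ++ s ++ D)) := by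
          congr 1; simp [List.append_assoc]
      _ = FreeGroup.mk ((A ++ t ++ [b1,b2]) ++ ([c2,c3] ++ s ++ D)) := hstep
      _ = FreeGroup.mk (A ++ (t ++ [b1,b2] ++ [c2,c3] ++ s) ++ D) := by
          congr 1; simp [List.append_assoc]
  · have h0 : A ++ t ++ [b1,b2,(v,b0)] = (A ++ t ++ [b1,b2]) ++ [(v,b0)] := by
      simp [List.append_assoc]
    have hrx' : IsRed (A ++ t ++ [b1,b2]) := (List.isChain_append.mp (h0 ▸ hrx)).1
    have hry2 : List.Chain' R ((v,!b0) :: c2 :: c3 :: (s ++ D)) := hry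
    have hry' : List.Chain' R (c2 :: c3 :: (s ++ D)) := (List.isChain_cons_cons.mp hry2).2
    have h : IsRed ((A ++ t ++ [b1,b2]) ++ (c2 :: c3 :: (s ++ D))) := by
      apply List.IsChain.append hrx' hry'
      intro p hp q hq
      rw [List.getLast?_append_of_ne_nil _ (by simp)] at hp
      simp at hp hq
      rw [← hp, ← hq]
      exact hR
    simpa [List.append_assoc] using h
  · simp only [List.length_append] at hlx hly ⊢
    simp at hlx hly ⊢
    omega

-- letters
abbrev gp : Lt := (0, true)
abbrev gm : Lt := (0, false)
abbrev hp : Lt := (1, true)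
abbrev hm : Lt := (1, false)

-- patterns
abbrev A0 : List Lt := [hm,gp,hp]
abbrev B0 : List Lt := [gp,hp,gm]
abbrev C0 : List Lt := [hp,gp,hm]
abbrev D0 : List Lt := [gp,hm,gm]
abbrev A1 : List Lt := [gp,hm,gm]
abbrev B1 : List Lt := [hp,gm,hm]
abbrev A2 : List Lt := [hp,gp,hm]
abbrev B2 : List Lt := [hm,gm,hp]

lemma StW_len_ge {x : FreeGroup (Fin 2)} {A B : List Lt} {a : ℕ}
    (h : StW x A B a) : A.length + B.length ≤ a := by
  obtain ⟨t, _, _, hl⟩ := h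
  simp only [List.length_append] at hl
  omega

/-- the three-step lemma -/
lemma step (ω ζ : ℕ → FreeGroup (Fin 2))
    (hωrec : ∀ n ≥ 1, ω (n + 1) = (ω n)⁻¹ * (ζ n)⁻¹)
    (hζrec : ∀ n ≥ 1, ζ (n + 1) = ω n * ζ n)
    (n a b : ℕ) (hn : 1 ≤ n)
    (hw : StW (ω n) A0 B0 a) (hz : StW (ζ n) C0 D0 b) :
    (StW (ω (n+1)) A1 B1 (a+b) ∧ StW (ζ (n+1)) A0 D0 (a+b)) ∧
    (StW (ω (n+2)) A2 B2 (2*(a+b)-2) ∧ StW (ζ (n+2)) A1 D0 (2*(a+b))) ∧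
    (StW (ω (n+3)) A0 B0 (4*(a+b)-2) ∧ StW (ζ (n+3)) C0 D0 (4*(a+b)-2)) := by
  have hiw := StW_inv hw
  have hiz := StW_inv hz
  -- invRev computations
  have e1 : invRev B0 = A1 := by decide
  have e2 : invRev A0 = [hm,gm,hp] := by decide
  have e3 : invRev D0 = [gp,hp,gm] := by decide
  have e4 : invRev C0 = B1 := by decide
  rw [e1, e2] at hiw
  rw [e3, e4] at hiz
  have hw1 : StW (ω (n+1)) A1 B1 (a+b) := by
    rw [hωrec n hn]
    exact StW_mul hiw hiz (by decide)
  have hz1 : StW (ζ (n+1)) A0 D0 (a+b) := by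
    rw [hζrec n hn]
    exact StW_mul hw hz (by decide)
  -- second step
  have hiw1 := StW_inv hw1
  have hiz1 := StW_inv hz1
  have e5 : invRev B1 = A2 := by decide
  have e6 : invRev A1 = [gp,hp,gm] := by decide
  have e7 : invRev D0 = [gp,hp,gm] := by decide
  have e8 : invRev A0 = B2 := by decide
  rw [e5, e6] at hiw1
  rw [e7, e8] at hiz1
  have hw2 : StW (ω (n+2)) A2 B2 (2*(a+b)-2) := by
    rw [hωrec (n+1) (by omega)]
    have h := StW_mul_cancel (v := 0) (b0 := false)
      (hx := hiw1) (hy := hiz1) (by decide)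
    have : (a+b) + (a+b) - 2 = 2*(a+b)-2 := by omega
    rwa [this] at h
  have hz2 : StW (ζ (n+2)) A1 D0 (2*(a+b)) := by
    rw [hζrec (n+1) (by omega)]
    have h := StW_mul hw1 hz1 (by decide)
    have : (a+b) + (a+b) = 2*(a+b) := by omega
    rwa [this] at h
  -- third step
  have hiw2 := StW_inv hw2
  have hiz2 := StW_inv hz2
  have e9 : invRev B2 = A0 := by decide
  have e10 : invRev A2 = [hp,gm,hm] := by decide
  have e11 : invRev D0 = [gp,hp,gm] := by decide
  have e12 : invRev A1 = B0 := by decide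
  rw [e9, e10] at hiw2
  rw [show (invRev [gp,hm,gm] : List Lt) = [gp,hp,gm] from by decide] at hiz2
  have hab : 12 ≤ a + b := by
    have := StW_len_ge hw; have := StW_len_ge hz; simp at *; omega
  have hw3 : StW (ω (n+3)) A0 B0 (4*(a+b)-2) := by
    rw [hωrec (n+2) (by omega)]
    have h := StW_mul hiw2 hiz2 (by decide)
    have : (2*(a+b)-2) + 2*(a+b) = 4*(a+b)-2 := by omega
    rwa [this] at h
  have hz3 : StW (ζ (n+3)) C0 D0 (4*(a+b)-2) := by
    rw [hζrec (n+2) (by omega)]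
    have h := StW_mul hw2 hz2 (by decide)
    have : (2*(a+b)-2) + 2*(a+b) = 4*(a+b)-2 := by omega
    rwa [this] at h
  exact ⟨⟨hw1, hz1⟩, ⟨hw2, hz2⟩, hw3, hz3⟩

lemma StW_norm {x : FreeGroup (Fin 2)} {A B : List Lt} {a : ℕ} (h : StW x A B a) :
    x.norm = a := by
  obtain ⟨t, hx, hr, hl⟩ := h
  rw [hx, norm_mk hr, hl]

end Elkasapy


open Elkasapy

/-- Reduced word lengths of Elkasapy's words `ω_n, ζ_n` in `F₂`, given by
`(ω₁,ζ₁) = (g, h⁻¹g⁻¹)`, `(ω_{n+1},ζ_{n+1}) = (ω_n⁻¹ζ_n⁻¹, ω_nζ_n)`.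
For `n ≥ 2`:
`len(ω_n) = len(ζ_n) = (13·2^{n-2}+2)/7` when `n ≡ 0 mod 3`;
`len(ω_n) = len(ζ_n) = (13·2^{n-2}+4)/7` when `n ≡ 1 mod 3` (`n ≥ 4`);
`len(ω_n) = (13·2^{n-2}-6)/7`, `len(ζ_n) = (13·2^{n-2}+8)/7` when `n ≡ 2 mod 3`.
The divisions are stated multiplied through by `7` to stay in `ℕ`. -/
theorem elkasapy_lengths (ω ζ : ℕ → FreeGroup (Fin 2))
    (hω1 : ω 1 = FreeGroup.of 0)
    (hζ1 : ζ 1 = (FreeGroup.of 1)⁻¹ * (FreeGroup.of 0)⁻¹)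
    (hωrec : ∀ n ≥ 1, ω (n + 1) = (ω n)⁻¹ * (ζ n)⁻¹)
    (hζrec : ∀ n ≥ 1, ζ (n + 1) = ω n * ζ n) :
    ∀ n ≥ 2,
      (n % 3 = 0 →
        7 * (ω n).norm = 13 * 2 ^ (n - 2) + 2 ∧
        7 * (ζ n).norm = 13 * 2 ^ (n - 2) + 2) ∧
      (n % 3 = 1 → n ≥ 4 →
        7 * (ω n).norm = 13 * 2 ^ (n - 2) + 4 ∧
        7 * (ζ n).norm = 13 * 2 ^ (n - 2) + 4) ∧
      (n % 3 = 2 →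
        7 * (ω n).norm + 6 = 13 * 2 ^ (n - 2) ∧
        7 * (ζ n).norm = 13 * 2 ^ (n - 2) + 8) := by
  -- explicit closed forms for small n
  have ew1 : ω 1 = FreeGroup.mk [gp] := by rw [hω1]; rfl
  have ez1 : ζ 1 = FreeGroup.mk [hm,gm] := by rw [hζ1]; decide
  have ew2 : ω 2 = FreeGroup.mk [hp] := by
    rw [hωrec 1 le_rfl, ew1, ez1]; decide
  have ez2 : ζ 2 = FreeGroup.mk [gp,hm,gm] := by
    rw [hζrec 1 le_rfl, ew1, ez1]; decide
  have ew3 : ω 3 = FreeGroup.mk [hm,gp,hp,gm] := by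
    rw [hωrec 2 (by norm_num), ew2, ez2]; decide
  have ez3 : ζ 3 = FreeGroup.mk [hp,gp,hm,gm] := by
    rw [hζrec 2 (by norm_num), ew2, ez2]; decide
  have ew4 : ω 4 = FreeGroup.mk [gp,hm,gm,hp,gp,hp,gm,hm] := by
    rw [hωrec 3 (by norm_num), ew3, ez3]; decide
  have ez4 : ζ 4 = FreeGroup.mk [hm,gp,hp,gm,hp,gp,hm,gm] := by
    rw [hζrec 3 (by norm_num), ew3, ez3]; decide
  have ew5 : ω 5 = FreeGroup.mk [hp,gp,hm,gm,hm,gp,hp,hp,gm,hm,gp,hm,gm,hp] := by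
    rw [hωrec 4 (by norm_num), ew4, ez4]; decide
  have ez5 : ζ 5 = FreeGroup.mk [gp,hm,gm,hp,gp,hp,gm,hm,hm,gp,hp,gm,hp,gp,hm,gm] := by
    rw [hζrec 4 (by norm_num), ew4, ez4]; decide
  have ew6 : ω 6 = FreeGroup.mk
      [hm,gp,hp,gm,hp,gp,hm,hm,gm,hp,gp,hp,gm,hm,gp,hp,gm,hm,gp,hm,gm,hp,hp,gp,hm,gm,hm,gp,hp,gm] := by
    rw [hωrec 5 (by norm_num), ew5, ez5]; decide
  have ez6 : ζ 6 = FreeGroup.mk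
      [hp,gp,hm,gm,hm,gp,hp,hp,gm,hm,gp,hm,gm,hp,gp,hm,gm,hp,gp,hp,gm,hm,hm,gp,hp,gm,hp,gp,hm,gm] := by
    rw [hζrec 5 (by norm_num), ew5, ez5]; decide
  -- base for the three-step induction
  have hw6 : StW (ω 6) A0 B0 30 := by
    refine ⟨[gm,hp,gp,hm,hm,gm,hp,gp,hp,gm,hm,gp,hp,gm,hm,gp,hm,gm,hp,hp,gp,hm,gm,hm], ?_, isRed_of _ rfl, by decide⟩
    rw [ew6]; decide
  have hz6 : StW (ζ 6) C0 D0 30 := by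
    refine ⟨[gm,hm,gp,hp,hp,gm,hm,gp,hm,gm,hp,gp,hm,gm,hp,gp,hp,gm,hm,hm,gp,hp,gm,hp], ?_, isRed_of _ rfl, by decide⟩
    rw [ez6]; decide
  have main : ∀ k : ℕ, ∃ a, 7*a = 13*2^(3*k+4)+2 ∧
      StW (ω (3*k+6)) A0 B0 a ∧ StW (ζ (3*k+6)) C0 D0 a := by
    intro k
    induction k with
    | zero => exact ⟨30, by norm_num, hw6, hz6⟩
    | succ k ih =>
      obtain ⟨a, ha, hw, hz⟩ := ih
      obtain ⟨_, _, h3w, h3z⟩ :=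
        step ω ζ hωrec hζrec (3*k+6) a a (by omega) hw hz
      have hidx : 3*(k+1)+6 = 3*k+6+3 := by ring
      refine ⟨4*(a+a)-2, ?_, ?_, ?_⟩
      · have h2 : (2:ℕ)^(3*(k+1)+4) = 8 * 2^(3*k+4) := by ring
        omega
      · rw [hidx]; exact h3w
      · rw [hidx]; exact h3z
  -- norms for small n
  have nw2 : (ω 2).norm = 1 := by rw [ew2]; decide
  have nz2 : (ζ 2).norm = 3 := by rw [ez2]; decide
  have nw3 : (ω 3).norm = 4 := by rw [ew3]; decide
  have nz3 : (ζ 3).norm = 4 := by rw [ez3]; decide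
  have nw4 : (ω 4).norm = 8 := by rw [ew4]; decide
  have nz4 : (ζ 4).norm = 8 := by rw [ez4]; decide
  have nw5 : (ω 5).norm = 14 := by rw [ew5]; decide
  have nz5 : (ζ 5).norm = 16 := by rw [ez5]; decide
  intro n hn
  by_cases hn6 : n < 6
  · interval_cases n
    · exact ⟨fun h => by omega, fun h => by omega,
        fun _ => by rw [nw2, nz2]; norm_num⟩
    · exact ⟨fun _ => by rw [nw3, nz3]; norm_num, fun h => by omega, fun h => by omega⟩
    · exact ⟨fun h => by omega, fun _ _ => by rw [nw4, nz4]; norm_num, fun h => by omega⟩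
    · exact ⟨fun h => by omega, fun h => by omega,
        fun _ => by rw [nw5, nz5]; norm_num⟩
  · push_neg at hn6
    rcases (show n % 3 = 0 ∨ n % 3 = 1 ∨ n % 3 = 2 by omega) with h|h|h
    · obtain ⟨k, rfl⟩ : ∃ k, n = 3*k+6 := ⟨(n-6)/3, by omega⟩
      obtain ⟨a, ha, hw, hz⟩ := main k
      have nw := StW_norm hw
      have nz := StW_norm hz
      have hidx : 3*k+6-2 = 3*k+4 := by omega
      refine ⟨fun _ => ?_, fun h => by omega, fun h => by omega⟩
      rw [nw, nz, hidx]
      exact ⟨ha, ha⟩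
    · obtain ⟨k, rfl⟩ : ∃ k, n = 3*k+7 := ⟨(n-7)/3, by omega⟩
      obtain ⟨a, ha, hw, hz⟩ := main k
      obtain ⟨⟨hw1, hz1⟩, _, _⟩ := step ω ζ hωrec hζrec (3*k+6) a a (by omega) hw hz
      have hidx : 3*k+6+1 = 3*k+7 := by ring
      rw [hidx] at hw1 hz1
      have nw := StW_norm hw1
      have nz := StW_norm hz1
      have hidx2 : 3*k+7-2 = 3*k+5 := by omega
      have h2 : (2:ℕ)^(3*k+5) = 2 * 2^(3*k+4) := by ring
      refine ⟨fun h => by omega, fun _ _ => ?_, fun h => by omega⟩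
      rw [nw, nz, hidx2]
      constructor <;> omega
    · obtain ⟨k, rfl⟩ : ∃ k, n = 3*k+8 := ⟨(n-8)/3, by omega⟩
      obtain ⟨a, ha, hw, hz⟩ := main k
      obtain ⟨_, ⟨hw2, hz2⟩, _⟩ := step ω ζ hωrec hζrec (3*k+6) a a (by omega) hw hz
      have hidx : 3*k+6+2 = 3*k+8 := by ring
      rw [hidx] at hw2 hz2
      have nw := StW_norm hw2
      have nz := StW_norm hz2
      have hidx2 : 3*k+8-2 = 3*k+6 := by omega
      have h2 : (2:ℕ)^(3*k+6) = 4 * 2^(3*k+4) := by ring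
      refine ⟨fun h => by omega, fun h => by omega, fun _ => ?_⟩
      rw [nw, nz, hidx2]
      constructor <;> omega
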